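/- Let δ₀ > 0 and let A := {ω ∈ Ω : det(Ẋ(ω)ᵀ·Ẋ(ω)) > δ₀}, assumed to satisfy μ(A) > 0. If the product of the indicator of A with every entry of Q ·ᵥ u̇, of Q ·ᵥ g, and of μvec is integrable, then ∫_A μvec dμ = ∫ 1_A · (Q ·ᵥ ẏ − Q ·ᵥ g) dμ; consequently the conditional mean of μvec given A equals (∫ 1_A (Q ·ᵥ ẏ − Q ·ᵥ g) dμ) / μ(A). (Identification of the trimmed average partial effect E(μ | det(ẊᵀẊ) > δ₀).) -/

import Mathlib

open MeasureTheory Matrix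

private lemma measurable_det_of_entries {Ω : Type*} {mΩ : MeasurableSpace Ω} {d : ℕ}
    {B : Ω → Matrix (Fin d) (Fin d) ℝ} (h : ∀ i j, Measurable fun ω => B ω i j) :
    Measurable fun ω => (B ω).det := by
  simp_rw [Matrix.det_apply']
  exact Finset.measurable_sum _ fun σ _ =>
    (Finset.measurable_prod _ fun i _ => h (σ i) i).const_mul _

private lemma integrable_pi_of_coord {Ω : Type*} {mΩ : MeasurableSpace Ω} {μ : Measure Ω} {d : ℕ}
    {f : Ω → Fin d → ℝ} (h : ∀ i, Integrable (fun ω => f ω i) μ) : Integrable f μ := by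
  have hrepr : f = fun ω => ∑ i, f ω i • (Pi.single i 1 : Fin d → ℝ) := by
    funext ω j
    simp [Finset.sum_apply, Pi.single_apply]
  rw [hrepr]
  exact integrable_finset_sum _ fun i _ => (h i).smul_const _

private lemma my_integral_indicator {Ω : Type*} {E : Type*} [NormedAddCommGroup E]
    [NormedSpace ℝ E] {mΩ : MeasurableSpace Ω} {μ : Measure Ω} {s : Set Ω}
    (hs : MeasurableSet s) (f : Ω → E) :
    ∫ x, s.indicator f x ∂μ = ∫ x in s, f x ∂μ :=
  integral_indicator hs

private lemma integral_coord {Ω : Type*} {mΩ : MeasurableSpace Ω} {μ : Measure Ω} {d : ℕ}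
    {f : Ω → Fin d → ℝ} (hf : Integrable f μ) (i : Fin d) :
    (∫ ω, f ω ∂μ) i = ∫ ω, f ω i ∂μ :=
  ((ContinuousLinearMap.proj (R := ℝ) (φ := fun _ : Fin d => ℝ) i).integral_comp_comm hf).symm

/-- Identification of the trimmed average partial effect `E(μ | det(ẊᵀẊ) > δ₀)`. -/
theorem trimmed_average_partial_effect_identification
    {Ω : Type*} {mΩ : MeasurableSpace Ω} (μ : Measure Ω) [IsProbabilityMeasure μ]
    (ℋ : MeasurableSpace Ω) (hℋ : ℋ ≤ mΩ)
    (m d : ℕ) (hd : 0 < d) (hdm : d < m)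
    (Xdot : Ω → Matrix (Fin m) (Fin d) ℝ)
    (hXmeas : ∀ i j, StronglyMeasurable[ℋ] fun ω => Xdot ω i j)
    (hXrank : ∀ᵐ ω ∂μ, (Xdot ω).rank = d)
    (Q : Ω → Matrix (Fin d) (Fin m) ℝ)
    (hQ : ∀ ω, Q ω = ((Xdot ω)ᵀ * Xdot ω)⁻¹ * (Xdot ω)ᵀ)
    (μvec : Ω → Fin d → ℝ)
    (g : Ω → Fin m → ℝ)
    (udot : Ω → Fin m → ℝ) (hu_int : Integrable udot μ)
    (hu_ce : ∀ i, μ[(fun ω => udot ω i) | ℋ] =ᵐ[μ] 0)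
    (ydot : Ω → Fin m → ℝ)
    (hy : ∀ ω, ydot ω = Xdot ω *ᵥ μvec ω + g ω + udot ω)
    (δ₀ : ℝ) (hδ₀ : 0 < δ₀)
    (A : Set Ω) (hA : A = {ω | δ₀ < ((Xdot ω)ᵀ * Xdot ω).det})
    (hAm : 0 < μ A)
    (hQu : ∀ i, Integrable (A.indicator fun ω => (Q ω *ᵥ udot ω) i) μ)
    (hQg : ∀ i, Integrable (A.indicator fun ω => (Q ω *ᵥ g ω) i) μ)
    (hμvecA : ∀ i, Integrable (A.indicator fun ω => μvec ω i) μ) :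
    (∫ ω in A, μvec ω ∂μ
        = ∫ ω, A.indicator (fun ω => Q ω *ᵥ ydot ω - Q ω *ᵥ g ω) ω ∂μ)
      ∧ (⨍ ω in A, μvec ω ∂μ
          = (μ A).toReal⁻¹ •
              ∫ ω, A.indicator (fun ω => Q ω *ᵥ ydot ω - Q ω *ᵥ g ω) ω ∂μ) := by
  classical
  -- entrywise measurability infrastructure (all w.r.t. ℋ)
  have hMentry : ∀ i j, Measurable[ℋ] fun ω => ((Xdot ω)ᵀ * Xdot ω) i j := by
    intro i j
    have he : (fun ω => ((Xdot ω)ᵀ * Xdot ω) i j)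
        = fun ω => ∑ k, Xdot ω k i * Xdot ω k j := by
      funext ω; rw [Matrix.mul_apply]; simp [Matrix.transpose_apply]
    rw [he]
    exact Finset.measurable_sum _ fun k _ =>
      (hXmeas k i).measurable.mul (hXmeas k j).measurable
  have hdetm : Measurable[ℋ] fun ω => ((Xdot ω)ᵀ * Xdot ω).det :=
    measurable_det_of_entries hMentry
  have hadjm : ∀ i k, Measurable[ℋ] fun ω => ((Xdot ω)ᵀ * Xdot ω).adjugate i k := by
    intro i k
    simp_rw [Matrix.adjugate_apply]
    refine measurable_det_of_entries fun a b => ?_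
    simp_rw [Matrix.updateRow_apply]
    by_cases hak : a = k
    · simp only [hak, if_true]; exact measurable_const
    · simp only [hak, if_false]; exact hMentry a b
  have hMinv : ∀ i k, Measurable[ℋ] fun ω => ((Xdot ω)ᵀ * Xdot ω)⁻¹ i k := by
    intro i k
    have he : (fun ω => ((Xdot ω)ᵀ * Xdot ω)⁻¹ i k)
        = fun ω => (((Xdot ω)ᵀ * Xdot ω).det)⁻¹ * ((Xdot ω)ᵀ * Xdot ω).adjugate i k := by
      funext ω
      rw [Matrix.inv_def, Matrix.smul_apply, smul_eq_mul, Ring.inverse_eq_inv']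
    rw [he]
    exact hdetm.inv.mul (hadjm i k)
  have hQm : ∀ i j, Measurable[ℋ] fun ω => Q ω i j := by
    intro i j
    have h1 : (fun ω => Q ω i j)
        = fun ω => ∑ k, ((Xdot ω)ᵀ * Xdot ω)⁻¹ i k * Xdot ω j k := by
      funext ω; rw [hQ, Matrix.mul_apply]
      simp [Matrix.transpose_apply]
    rw [h1]
    exact Finset.measurable_sum _ fun k _ => (hMinv i k).mul (hXmeas j k).measurable
  have hAsetH : MeasurableSet[ℋ] A := by
    rw [hA]; exact measurableSet_lt measurable_const hdetm
  have hAset : MeasurableSet[mΩ] A := hℋ _ hAsetH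
  -- coordinates of udot are integrable
  have huj : ∀ j, Integrable (fun ω => udot ω j) μ :=
    fun j => (ContinuousLinearMap.proj (R := ℝ) (φ := fun _ : Fin m => ℝ) j).integrable_comp
      hu_int
  haveI : SigmaFinite (μ.trim hℋ) := inferInstance
  -- key step: ∫ 1_A (Q *ᵥ u̇)_i = 0
  have hzero : ∀ i, ∫ ω, A.indicator (fun ω => (Q ω *ᵥ udot ω) i) ω ∂μ = 0 := by
    intro i
    set h : Ω → ℝ := fun ω => (Q ω *ᵥ udot ω) i with hh
    set s : ℕ → Set Ω := fun n => A ∩ {ω | ∀ j, |Q ω i j| ≤ n} with hs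
    have hsH : ∀ n, MeasurableSet[ℋ] (s n) := by
      intro n
      refine hAsetH.inter ?_
      have he : {ω | ∀ j, |Q ω i j| ≤ (n : ℝ)} = ⋂ j, {ω | |Q ω i j| ≤ (n : ℝ)} := by
        ext ω; simp
      rw [he]
      exact MeasurableSet.iInter fun j => measurableSet_le (hQm i j).abs measurable_const
    have hssubA : ∀ n, s n ⊆ A := fun n => Set.inter_subset_left
    have hint_n : ∀ (n : ℕ) (j : Fin m),
        Integrable (fun ω => (s n).indicator (fun ω => Q ω i j) ω * udot ω j) μ := by
      intro n j
      refine (huj j).bdd_mul (c := (n : ℝ)) ?_ (Filter.Eventually.of_forall fun ω => ?_)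
      · exact (Measurable.mono ((hQm i j).indicator (hsH n)) hℋ le_rfl).aestronglyMeasurable
      · by_cases hω : ω ∈ s n
        · rw [Set.indicator_of_mem hω]
          simpa using hω.2 j
        · rw [Set.indicator_of_notMem hω]
          simpa using n.cast_nonneg
    have hzero_n : ∀ n, ∫ ω, (s n).indicator h ω ∂μ = 0 := by
      intro n
      have hrepr : (s n).indicator h
          = fun ω => ∑ j, (s n).indicator (fun ω => Q ω i j) ω * udot ω j := by
        funext ω
        by_cases hω : ω ∈ s n
        · simp only [Set.indicator_of_mem hω, hh, Matrix.mulVec, dotProduct]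
        · simp [Set.indicator_of_notMem hω]
      rw [hrepr, integral_finset_sum _ fun j _ => hint_n n j]
      refine Finset.sum_eq_zero fun j _ => ?_
      set f : Ω → ℝ := (s n).indicator fun ω => Q ω i j with hf
      have hfm : StronglyMeasurable[ℋ] f :=
        ((hQm i j).stronglyMeasurable).indicator (hsH n)
      have hint : Integrable (f * fun ω => udot ω j) μ := hint_n n j
      have hce := condExp_mul_of_stronglyMeasurable_left hfm hint (huj j)
      have h0 : (f * μ[(fun ω => udot ω j) | ℋ]) =ᵐ[μ] 0 := by
        filter_upwards [hu_ce j] with ω hω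
        simp [hω]
      calc ∫ ω, f ω * udot ω j ∂μ
          = ∫ ω, (μ[f * fun ω => udot ω j | ℋ]) ω ∂μ := (integral_condExp hℋ).symm
        _ = ∫ ω, (f * μ[(fun ω => udot ω j) | ℋ]) ω ∂μ := integral_congr_ae hce
        _ = 0 := by rw [integral_congr_ae h0]; simp
    have hieq : ∀ n, (s n).indicator h = (s n).indicator (A.indicator h) := by
      intro n; funext ω
      by_cases hω : ω ∈ s n
      · rw [Set.indicator_of_mem hω, Set.indicator_of_mem hω,
          Set.indicator_of_mem (hssubA n hω)]
      · rw [Set.indicator_of_notMem hω, Set.indicator_of_notMem hω]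
    have hconv : Filter.Tendsto (fun n => ∫ ω, (s n).indicator h ω ∂μ) Filter.atTop
        (nhds (∫ ω, A.indicator h ω ∂μ)) := by
      refine tendsto_integral_of_dominated_convergence (fun ω => ‖A.indicator h ω‖)
        (fun n => ?_) (hQu i).norm (fun n => ?_) ?_
      · rw [hieq n]
        exact (hQu i).1.indicator (hℋ _ (hsH n))
      · refine Filter.Eventually.of_forall fun ω => ?_
        show ‖(s n).indicator h ω‖ ≤ ‖A.indicator h ω‖
        by_cases hω : ω ∈ s n
        · rw [Set.indicator_of_mem hω, Set.indicator_of_mem (hssubA n hω)]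
        · rw [Set.indicator_of_notMem hω]; simp
      · refine Filter.Eventually.of_forall fun ω => ?_
        by_cases hω : ω ∈ A
        · obtain ⟨N, hN⟩ := exists_nat_ge (∑ j, |Q ω i j|)
          refine tendsto_atTop_of_eventually_const (i₀ := N) fun n hn => ?_
          have hωs : ω ∈ s n := by
            refine ⟨hω, fun j => ?_⟩
            calc |Q ω i j| ≤ ∑ k, |Q ω i k| :=
                  Finset.single_le_sum (f := fun k => |Q ω i k|)
                    (fun k _ => abs_nonneg _) (Finset.mem_univ j)
              _ ≤ (N : ℝ) := hN
              _ ≤ (n : ℝ) := by exact_mod_cast hn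
          rw [Set.indicator_of_mem hωs, Set.indicator_of_mem hω]
        · refine tendsto_atTop_of_eventually_const (i₀ := 0) fun n _ => ?_
          rw [Set.indicator_of_notMem (fun hc => hω (hssubA n hc)),
            Set.indicator_of_notMem hω]
    exact tendsto_nhds_unique hconv
      (((funext hzero_n : (fun n => ∫ ω, (s n).indicator h ω ∂μ) = fun _ => (0 : ℝ))) ▸
        tendsto_const_nhds)
  -- pointwise decomposition on A
  have hQX : ∀ ω ∈ A, Q ω * Xdot ω = 1 := by
    intro ω hω
    rw [hA] at hω
    have hdet : IsUnit ((Xdot ω)ᵀ * Xdot ω).det :=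
      isUnit_iff_ne_zero.2 (ne_of_gt (lt_trans hδ₀ hω))
    rw [hQ, Matrix.mul_assoc]
    exact Matrix.nonsing_inv_mul _ hdet
  have hdecomp : A.indicator (fun ω => Q ω *ᵥ ydot ω - Q ω *ᵥ g ω)
      = fun ω => A.indicator μvec ω + A.indicator (fun ω => Q ω *ᵥ udot ω) ω := by
    funext ω
    by_cases hω : ω ∈ A
    · simp only [Set.indicator_of_mem hω]
      rw [hy, Matrix.mulVec_add, Matrix.mulVec_add, Matrix.mulVec_mulVec, hQX ω hω,
        Matrix.one_mulVec]
      abel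
    · simp [Set.indicator_of_notMem hω]
  -- integrability of the vector-valued pieces
  have hcoord_ind : ∀ (f : Ω → Fin d → ℝ) (i : Fin d),
      (fun ω => A.indicator f ω i) = A.indicator fun ω => f ω i := by
    intro f i; funext ω
    by_cases hω : ω ∈ A <;> simp [hω]
  have hμ_pi : Integrable (A.indicator μvec) μ := by
    refine integrable_pi_of_coord fun i => ?_
    rw [hcoord_ind]
    exact hμvecA i
  have hQu_pi : Integrable (A.indicator fun ω => Q ω *ᵥ udot ω) μ := by
    refine integrable_pi_of_coord fun i => ?_
    rw [hcoord_ind]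
    exact hQu i
  have hQuint0 : ∫ ω, A.indicator (fun ω => Q ω *ᵥ udot ω) ω ∂μ = 0 := by
    funext i
    rw [integral_coord hQu_pi i]
    have he : (fun ω => A.indicator (fun ω => Q ω *ᵥ udot ω) ω i)
        = A.indicator fun ω => (Q ω *ᵥ udot ω) i := hcoord_ind _ i
    rw [he, hzero i]
    rfl
  have key : ∫ ω, A.indicator (fun ω => Q ω *ᵥ ydot ω - Q ω *ᵥ g ω) ω ∂μ
      = ∫ ω in A, μvec ω ∂μ := by
    rw [hdecomp, integral_add hμ_pi hQu_pi, hQuint0, add_zero, my_integral_indicator hAset]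
  exact ⟨key.symm, by rw [setAverage_eq, key]; rfl⟩
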